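/- Assume additionally n ≥ 2 (i.e., dimension 4n > 4). Define ε_{A'B'} by ε_{01} = 1 = −ε_{10}, ε_{00} = ε_{11} = 0; Λ_{AB} := (1/12) ∑_{C'∈{0,1}} [R^H(A,B;C',0,1;C') − R^H(B,A;C',0,1;C') − R^H(A,B;C',1,0;C') + R^H(B,A;C',1,0;C')]; Φ_{ABA'B'} := (1/4) ∑_{C'∈{0,1}} [R^H(A,B;C',A',B';C') + R^H(B,A;C',A',B';C') + R^H(A,B;C',B',A';C') + R^H(B,A;C',B',A';C')]; and Ψ_{ABC}{}^D := (1/2)(R^E(0,1;A,B,C;D) − R^E(1,0;A,B,C;D)) − δ_A{}^D Λ_{BC} − δ_B{}^D Λ_{AC}. Then for all indices: (a) (1/2)(R^E(A',B';A,B,C;D) − R^E(B',A';A,B,C;D)) = ε_{A'B'} (Ψ_{ABC}{}^D + δ_A{}^D Λ_{BC} + δ_B{}^D Λ_{AC}); (b) (1/2)(R^E(A',B';A,B,C;D) + R^E(B',A';A,B,C;D)) = δ_A{}^D Φ_{BCA'B'} − δ_B{}^D Φ_{ACA'B'}; (c) (1/2)(R^H(A,B;A',B',C';D') + R^H(B,A;A',B',C';D'))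 = δ_{A'}{}^{D'} Φ_{ABB'C'} − δ_{B'}{}^{D'} Φ_{ABA'C'}; (d) (1/2)(R^H(A,B;A',B',C';D') − R^H(B,A;A',B',C';D')) = Λ_{AB} (δ_{A'}{}^{D'} ε_{B'C'} + δ_{B'}{}^{D'} ε_{A'C'}); (e) Λ_{AB} = −Λ_{BA}; Φ_{ABA'B'} is symmetric in (A,B) and in (A',B'); Ψ_{ABC}{}^D is totally symmetric in (A,B,C); and ∑_{D} Ψ_{DBC}{}^{D} = 0. -/
import Mathlib

noncomputable section

/-- Kronecker delta with values in `ℂ`. -/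
def kdel {m : ℕ} (a b : Fin m) : ℂ := if a = b then 1 else 0

/-- The lowered epsilon symbol: `ε_{01} = 1`, `ε_{10} = −1`. -/
def epsLow (a b : Fin 2) : ℂ :=
  if a.val = 0 ∧ b.val = 1 then 1 else if a.val = 1 ∧ b.val = 0 then -1 else 0

/-- `Λ_{AB} = (1/3) R_{[AB]C'[A'B']}{}^{C'} / ε_{A'B'}`, written out explicitly. -/
def Lam (n : ℕ) (RH : Fin (2 * n) → Fin (2 * n) → Fin 2 → Fin 2 → Fin 2 → Fin 2 → ℂ)
    (A B : Fin (2 * n)) : ℂ :=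
  (1 / 12 : ℂ) * ∑ C' : Fin 2,
    (RH A B C' 0 1 C' - RH B A C' 0 1 C' - RH A B C' 1 0 C' + RH B A C' 1 0 C')

/-- `Φ_{ABA'B'} = R_{(AB)C'(A'B')}{}^{C'}`, written out explicitly. -/
def Phi (n : ℕ) (RH : Fin (2 * n) → Fin (2 * n) → Fin 2 → Fin 2 → Fin 2 → Fin 2 → ℂ)
    (A B : Fin (2 * n)) (A' B' : Fin 2) : ℂ :=
  (1 / 4 : ℂ) * ∑ C' : Fin 2,
    (RH A B C' A' B' C' + RH B A C' A' B' C' + RH A B C' B' A' C' + RH B A C' B' A' C')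

/-- `Ψ_{ABC}{}^D`, defined by the first curvature decomposition identity. -/
def Psi (n : ℕ)
    (RE : Fin 2 → Fin 2 → Fin (2 * n) → Fin (2 * n) → Fin (2 * n) → Fin (2 * n) → ℂ)
    (RH : Fin (2 * n) → Fin (2 * n) → Fin 2 → Fin 2 → Fin 2 → Fin 2 → ℂ)
    (A B C D : Fin (2 * n)) : ℂ :=
  (1 / 2 : ℂ) * (RE 0 1 A B C D - RE 1 0 A B C D) -
    kdel A D * Lam n RH B C - kdel B D * Lam n RH A C


section Helpers

lemma k00 : kdel (0:Fin 2) 0 = 1 := by norm_num [kdel]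
lemma k01 : kdel (0:Fin 2) 1 = 0 := by norm_num [kdel]
lemma k10 : kdel (1:Fin 2) 0 = 0 := by norm_num [kdel, Fin.ext_iff]
lemma k11 : kdel (1:Fin 2) 1 = 1 := by norm_num [kdel]
lemma e00 : epsLow 0 0 = 0 := by norm_num [epsLow]
lemma e01 : epsLow 0 1 = 1 := by norm_num [epsLow]
lemma e10 : epsLow 1 0 = -1 := by norm_num [epsLow]
lemma e11 : epsLow 1 1 = 0 := by norm_num [epsLow]

lemma sum_mul_kdel {m : ℕ} (f : Fin m → ℂ) (a : Fin m) :
    ∑ c, f c * kdel a c = f a := by simp [kdel]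

lemma sum_kdel_mul {m : ℕ} (f : Fin m → ℂ) (a : Fin m) :
    ∑ c, kdel a c * f c = f a := by simp [kdel]

lemma sum_kdel_diag (n : ℕ) : ∑ c : Fin (2*n), kdel c c = 2*(n:ℂ) := by simp [kdel]

lemma sum_kdel_diag2 : ∑ c : Fin 2, kdel c c = 2 := by simp [kdel]

end Helpers

/-- contraction of RE over its second lower unprimed index and upper index -/
def Ucon {n : ℕ} (RE : Fin 2 → Fin 2 → Fin (2 * n) → Fin (2 * n) → Fin (2 * n) → Fin (2 * n) → ℂ)
    (p q : Fin 2) (x y : Fin (2 * n)) : ℂ := ∑ c, RE p q x c y c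

section Main

variable {n : ℕ}

lemma hH4 (RH : Fin (2 * n) → Fin (2 * n) → Fin 2 → Fin 2 → Fin 2 → Fin 2 → ℂ)
    (htH : ∀ A B A' B', ∑ C', RH A B A' B' C' C' = 0) (A B : Fin (2*n)) (p q : Fin 2) :
    RH A B p q 0 0 + RH A B p q 1 1 = 0 := by
  have h := htH A B p q
  rwa [Fin.sum_univ_two] at h

lemma hC2L (RE : Fin 2 → Fin 2 → Fin (2 * n) → Fin (2 * n) → Fin (2 * n) → Fin (2 * n) → ℂ)
    (RH : Fin (2 * n) → Fin (2 * n) → Fin 2 → Fin 2 → Fin 2 → Fin 2 → ℂ)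
    (hE : ∀ A' B' A B C D, RE A' B' A B C D = -RE B' A' B A C D)
    (hH : ∀ A B A' B' C' D', RH A B A' B' C' D' = -RH B A B' A' C' D')
    (htE : ∀ A' B' A B, ∑ C, RE A' B' A B C C = 0)
    (hB : ∀ (A B C : Fin (2 * n)) (A' B' C' : Fin 2) (D : Fin (2 * n)) (D' : Fin 2),
      (RE A' B' A B C D * kdel C' D' + RH A B A' B' C' D' * kdel C D) +
      (RE B' C' B C A D * kdel A' D' + RH B C B' C' A' D' * kdel A D) +
      (RE C' A' C A B D * kdel B' D' + RH C A C' A' B' D' * kdel B D) = 0)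
    (A B : Fin (2*n)) (p q r s : Fin 2) :
    2*(n:ℂ) * RH A B p q r s - RH A B r q p s - RH A B p r q s
      + Ucon RE q r B A * kdel p s - Ucon RE p r A B * kdel q s = 0 := by
  have h : ∑ C : Fin (2*n), ((RE p q A B C C * kdel r s + RH A B p q r s * kdel C C) +
      (RE q r B C A C * kdel p s + RH B C q r p s * kdel A C) +
      (RE r p C A B C * kdel q s + RH C A r p q s * kdel B C)) = 0 :=
    Finset.sum_eq_zero fun C _ => hB A B C p q r C s
  simp only [Finset.sum_add_distrib] at h
  have e1 : ∑ C : Fin (2*n), RE p q A B C C * kdel r s = 0 := by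
    rw [← Finset.sum_mul, htE p q A B, zero_mul]
  have e2 : ∑ C : Fin (2*n), RH A B p q r s * kdel C C = 2*(n:ℂ) * RH A B p q r s := by
    rw [← Finset.mul_sum, sum_kdel_diag]; ring
  have e3 : ∑ C : Fin (2*n), RE q r B C A C * kdel p s = Ucon RE q r B A * kdel p s := by
    rw [← Finset.sum_mul]; rfl
  have e4 : ∑ C : Fin (2*n), RH B C q r p s * kdel A C = RH B A q r p s :=
    sum_mul_kdel (fun C => RH B C q r p s) A
  have e5 : ∑ C : Fin (2*n), RE r p C A B C * kdel q s = -(Ucon RE p r A B * kdel q s) := by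
    calc ∑ C : Fin (2*n), RE r p C A B C * kdel q s
        = ∑ C : Fin (2*n), -(RE p r A C B C * kdel q s) :=
          Finset.sum_congr rfl fun C _ => by rw [hE r p C A B C]; ring
      _ = -(Ucon RE p r A B * kdel q s) := by
          rw [Finset.sum_neg_distrib, ← Finset.sum_mul]; rfl
  have e6 : ∑ C : Fin (2*n), RH C A r p q s * kdel B C = RH B A r p q s :=
    sum_mul_kdel (fun C => RH C A r p q s) B
  linear_combination h - e1 - e2 - e3 - e4 - e5 - e6 - hH B A q r p s - hH B A r p q s

end Main

section Main2

variable {n : ℕ}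

lemma hC1L (RE : Fin 2 → Fin 2 → Fin (2 * n) → Fin (2 * n) → Fin (2 * n) → Fin (2 * n) → ℂ)
    (RH : Fin (2 * n) → Fin (2 * n) → Fin 2 → Fin 2 → Fin 2 → Fin 2 → ℂ)
    (hH : ∀ A B A' B' C' D', RH A B A' B' C' D' = -RH B A B' A' C' D')
    (htH : ∀ A B A' B', ∑ C', RH A B A' B' C' C' = 0)
    (hB : ∀ (A B C : Fin (2 * n)) (A' B' C' : Fin 2) (D : Fin (2 * n)) (D' : Fin 2),
      (RE A' B' A B C D * kdel C' D' + RH A B A' B' C' D' * kdel C D) +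
      (RE B' C' B C A D * kdel A' D' + RH B C B' C' A' D' * kdel A D) +
      (RE C' A' C A B D * kdel B' D' + RH C A C' A' B' D' * kdel B D) = 0)
    (A B C : Fin (2*n)) (p q : Fin 2) (D : Fin (2*n)) :
    2 * RE p q A B C D + RE q p B C A D + RE q p C A B D
      + (RH B C q 0 p 0 + RH B C q 1 p 1) * kdel A D
      - (RH A C p 0 q 0 + RH A C p 1 q 1) * kdel B D = 0 := by
  have h : ∑ r' : Fin 2, ((RE p q A B C D * kdel r' r' + RH A B p q r' r' * kdel C D) +
      (RE q r' B C A D * kdel p r' + RH B C q r' p r' * kdel A D) +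
      (RE r' p C A B D * kdel q r' + RH C A r' p q r' * kdel B D)) = 0 :=
    Finset.sum_eq_zero fun r' _ => hB A B C p q r' D r'
  simp only [Finset.sum_add_distrib] at h
  have e1 : ∑ r' : Fin 2, RE p q A B C D * kdel r' r' = 2 * RE p q A B C D := by
    rw [← Finset.mul_sum, sum_kdel_diag2]; ring
  have e2 : ∑ r' : Fin 2, RH A B p q r' r' * kdel C D = 0 := by
    rw [← Finset.sum_mul, htH A B p q, zero_mul]
  have e3 : ∑ r' : Fin 2, RE q r' B C A D * kdel p r' = RE q p B C A D :=
    sum_mul_kdel (fun r' => RE q r' B C A D) p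
  have e4 : ∑ r' : Fin 2, RH B C q r' p r' * kdel A D
      = (RH B C q 0 p 0 + RH B C q 1 p 1) * kdel A D := by
    rw [← Finset.sum_mul, Fin.sum_univ_two]
  have e5 : ∑ r' : Fin 2, RE r' p C A B D * kdel q r' = RE q p C A B D :=
    sum_mul_kdel (fun r' => RE r' p C A B D) q
  have e6 : ∑ r' : Fin 2, RH C A r' p q r' * kdel B D
      = (RH C A 0 p q 0 + RH C A 1 p q 1) * kdel B D := by
    rw [← Finset.sum_mul, Fin.sum_univ_two]
  linear_combination h - e1 - e2 - e3 - e4 - e5 - e6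
    - kdel B D * (hH C A 0 p q 0) - kdel B D * (hH C A 1 p q 1)

lemma hC5L (RE : Fin 2 → Fin 2 → Fin (2 * n) → Fin (2 * n) → Fin (2 * n) → Fin (2 * n) → ℂ)
    (RH : Fin (2 * n) → Fin (2 * n) → Fin 2 → Fin 2 → Fin 2 → Fin 2 → ℂ)
    (hE : ∀ A' B' A B C D, RE A' B' A B C D = -RE B' A' B A C D)
    (hH : ∀ A B A' B' C' D', RH A B A' B' C' D' = -RH B A B' A' C' D')
    (htE : ∀ A' B' A B, ∑ C, RE A' B' A B C C = 0)
    (htH : ∀ A B A' B', ∑ C', RH A B A' B' C' C' = 0)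
    (hB : ∀ (A B C : Fin (2 * n)) (A' B' C' : Fin 2) (D : Fin (2 * n)) (D' : Fin 2),
      (RE A' B' A B C D * kdel C' D' + RH A B A' B' C' D' * kdel C D) +
      (RE B' C' B C A D * kdel A' D' + RH B C B' C' A' D' * kdel A D) +
      (RE C' A' C A B D * kdel B' D' + RH C A C' A' B' D' * kdel B D) = 0)
    (x y : Fin (2*n)) (p q : Fin 2) :
    -2 * Ucon RE q p x y + Ucon RE q p y x
      + 2*(n:ℂ) * (RH x y q 0 p 0 + RH x y q 1 p 1)
      - (RH x y p 0 q 0 + RH x y p 1 q 1) = 0 := by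
  have h : ∑ A : Fin (2*n), (2 * RE p q A x y A + RE q p x y A A + RE q p y A x A
      + (RH x y q 0 p 0 + RH x y q 1 p 1) * kdel A A
      - (RH A y p 0 q 0 + RH A y p 1 q 1) * kdel x A) = 0 :=
    Finset.sum_eq_zero fun A _ => hC1L RE RH hH htH hB A x y p q A
  simp only [Finset.sum_add_distrib, Finset.sum_sub_distrib] at h
  have e1 : ∑ A : Fin (2*n), 2 * RE p q A x y A = -2 * Ucon RE q p x y := by
    calc ∑ A : Fin (2*n), 2 * RE p q A x y A
        = ∑ A : Fin (2*n), -2 * RE q p x A y A :=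
          Finset.sum_congr rfl fun A _ => by rw [hE p q A x y A]; ring
      _ = -2 * Ucon RE q p x y := by rw [← Finset.mul_sum]; rfl
  have e2 : ∑ A : Fin (2*n), RE q p x y A A = 0 := htE q p x y
  have e3 : ∑ A : Fin (2*n), RE q p y A x A = Ucon RE q p y x := rfl
  have e4 : ∑ A : Fin (2*n), (RH x y q 0 p 0 + RH x y q 1 p 1) * kdel A A
      = 2*(n:ℂ) * (RH x y q 0 p 0 + RH x y q 1 p 1) := by
    rw [← Finset.mul_sum, sum_kdel_diag]; ring
  have e5 : ∑ A : Fin (2*n), (RH A y p 0 q 0 + RH A y p 1 q 1) * kdel x A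
      = RH x y p 0 q 0 + RH x y p 1 q 1 :=
    sum_mul_kdel (fun A => RH A y p 0 q 0 + RH A y p 1 q 1) x
  linear_combination h - e1 - e2 - e3 - e4 + e5

end Main2

section Main3

variable {n : ℕ}

set_option maxHeartbeats 1000000 in
lemma keymul
    (RE : Fin 2 → Fin 2 → Fin (2 * n) → Fin (2 * n) → Fin (2 * n) → Fin (2 * n) → ℂ)
    (RH : Fin (2 * n) → Fin (2 * n) → Fin 2 → Fin 2 → Fin 2 → Fin 2 → ℂ)
    (hE : ∀ A' B' A B C D, RE A' B' A B C D = -RE B' A' B A C D)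
    (hH : ∀ A B A' B' C' D', RH A B A' B' C' D' = -RH B A B' A' C' D')
    (htE : ∀ A' B' A B, ∑ C, RE A' B' A B C C = 0)
    (htH : ∀ A B A' B', ∑ C', RH A B A' B' C' C' = 0)
    (hB : ∀ (A B C : Fin (2 * n)) (A' B' C' : Fin 2) (D : Fin (2 * n)) (D' : Fin 2),
      (RE A' B' A B C D * kdel C' D' + RH A B A' B' C' D' * kdel C D) +
      (RE B' C' B C A D * kdel A' D' + RH B C B' C' A' D' * kdel A D) +
      (RE C' A' C A B D * kdel B' D' + RH C A C' A' B' D' * kdel B D) = 0)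
    (A B : Fin (2*n)) (p q r s : Fin 2) :
    (2*(n:ℂ)-2) * (2*(n:ℂ)+2) * (2*(n:ℂ)-1) * (2*(n:ℂ)+1) *
      (RH A B p q r s - (kdel p s * Phi n RH A B q r - kdel q s * Phi n RH A B p r
        + Lam n RH A B * (kdel p s * epsLow q r + kdel q s * epsLow p r))) = 0 := by
  have hc2 := hC2L RE RH hE hH htE hB
  have hc5 := hC5L RE RH hE hH htE htH hB
  have hh4 := hH4 RH htH
  fin_cases p <;> fin_cases q <;> fin_cases r <;> fin_cases s
  · simp only [Fin.mk_zero, Fin.mk_one, Phi, Lam, Fin.sum_univ_two, k00, k01, k10, k11, e00, e01, e10, e11]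
    have w0 := hc2 A B 0 0 0 0
    have w1 := hc2 A B 0 0 1 1
    have w2 := hc2 A B 0 1 0 1
    have w3 := hc2 A B 1 0 0 1
    have w4 := hc5 A B 0 0
    simp only [k00, k01, k10, k11] at w0 w1 w2 w3 w4
    linear_combination ((-3 : ℂ) + (-1 : ℂ) * (2*(n:ℂ)) + (4 : ℂ) * (2*(n:ℂ))^2 + (1 : ℂ) * (2*(n:ℂ))^3 + (-1 : ℂ) * (2*(n:ℂ))^4) * w0 + ((-1 : ℂ) + (1 : ℂ) * (2*(n:ℂ)) + (1 : ℂ) * (2*(n:ℂ))^2 + (-1 : ℂ) * (2*(n:ℂ))^3) * w1 + ((-1 : ℂ) + (-1 : ℂ) * (2*(n:ℂ)) + (2 : ℂ) * (2*(n:ℂ))^2 + (1 : ℂ) * (2*(n:ℂ))^3 + (-1 : ℂ) * (2*(n:ℂ))^4) * w2 + ((1 : ℂ) + (-1 : ℂ) * (2*(n:ℂ))^2) * w3 + ((2 : ℂ) + (1 : ℂ) * (2*(n:ℂ)) + (-3 : ℂ) * (2*(n:ℂ))^2 + (-1 : ℂ) * (2*(n:ℂ))^3 + (1 : ℂ) *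 (2*(n:ℂ))^4) * w4
  · simp only [Fin.mk_zero, Fin.mk_one, Phi, Lam, Fin.sum_univ_two, k00, k01, k10, k11, e00, e01, e10, e11]
    have w0 := hc2 A B 0 0 0 1
    simp only [k00, k01, k10, k11] at w0
    linear_combination ((-2 : ℂ) + (-1 : ℂ) * (2*(n:ℂ)) + (2 : ℂ) * (2*(n:ℂ))^2 + (1 : ℂ) * (2*(n:ℂ))^3) * w0
  · simp only [Fin.mk_zero, Fin.mk_one, Phi, Lam, Fin.sum_univ_two, k00, k01, k10, k11, e00, e01, e10, e11]
    have w0 := hc2 A B 0 0 1 0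
    have w1 := hc2 B A 0 0 1 0
    have w2 := hc2 A B 0 1 0 0
    have w3 := hc2 B A 0 1 0 0
    have w4 := hc2 A B 0 1 1 1
    have w5 := hc2 B A 0 1 1 1
    have w6 := hc2 A B 1 0 0 0
    have w7 := hc2 B A 1 0 0 0
    have w8 := hc2 A B 1 0 1 1
    have w9 := hc2 B A 1 0 1 1
    have w10 := hc2 A B 1 1 0 1
    have w11 := hc2 B A 1 1 0 1
    have w12 := hc5 A B 0 1
    have w13 := hc5 B A 0 1
    simp only [k00, k01, k10, k11] at w0 w1 w2 w3 w4 w5 w6 w7 w8 w9 w10 w11 w12 w13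
    linear_combination ((4/3 : ℂ) + (-11/6 : ℂ) * (2*(n:ℂ)) + (-1/3 : ℂ) * (2*(n:ℂ))^2 + (5/6 : ℂ) * (2*(n:ℂ))^3) * w0 + ((2/3 : ℂ) + (-7/6 : ℂ) * (2*(n:ℂ)) + (1/3 : ℂ) * (2*(n:ℂ))^2 + (1/6 : ℂ) * (2*(n:ℂ))^3) * w1 + ((-2 : ℂ) + (-1/6 : ℂ) * (2*(n:ℂ)) + (1 : ℂ) * (2*(n:ℂ))^2 + (1/6 : ℂ) * (2*(n:ℂ))^3) * w2 + ((7/6 : ℂ) * (2*(n:ℂ)) + (-1/6 : ℂ) * (2*(n:ℂ))^3) * w3 + ((-2/3 : ℂ) + (-1/2 : ℂ) * (2*(n:ℂ)) + (1/6 : ℂ) * (2*(n:ℂ))^2) * w4 + ((2/3 : ℂ) + (1/2 : ℂ) * (2*(n:ℂ)) + (-1/6 : ℂ) * (2*(n:ℂ))^2) * w5 + ((-4/3 : ℂ) + (1/2 : ℂ) * (2*(n:ℂ)) + (11/6 : ℂ) * (2*(n:ℂ))^2 + (1/2 : ℂ) * (2*(n:ℂ))^3 + (-1/2 : ℂ)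 * (2*(n:ℂ))^4) * w6 + ((-2/3 : ℂ) + (1/2 : ℂ) * (2*(n:ℂ)) + (-5/6 : ℂ) * (2*(n:ℂ))^2 + (-1/2 : ℂ) * (2*(n:ℂ))^3 + (1/2 : ℂ) * (2*(n:ℂ))^4) * w7 + ((7/6 : ℂ) * (2*(n:ℂ)) + (1/2 : ℂ) * (2*(n:ℂ))^2 + (-2/3 : ℂ) * (2*(n:ℂ))^3) * w8 + ((-7/6 : ℂ) * (2*(n:ℂ)) + (-1/2 : ℂ) * (2*(n:ℂ))^2 + (2/3 : ℂ) * (2*(n:ℂ))^3) * w9 + ((2/3 : ℂ) + (-7/6 : ℂ) * (2*(n:ℂ)) + (-1/6 : ℂ) * (2*(n:ℂ))^2 + (7/6 : ℂ) * (2*(n:ℂ))^3 + (-1/2 : ℂ) * (2*(n:ℂ))^4) * w10 + ((-2/3 : ℂ) + (7/6 : ℂ) * (2*(n:ℂ)) + (1/6 : ℂ) * (2*(n:ℂ))^2 + (-7/6 : ℂ) * (2*(n:ℂ))^3 + (1/2 : ℂ) * (2*(n:ℂ))^4) * w11 + ((1 : ℂ) * (2*(n:ℂ)) + (-1/2 :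 ℂ) * (2*(n:ℂ))^2 + (-1 : ℂ) * (2*(n:ℂ))^3 + (1/2 : ℂ) * (2*(n:ℂ))^4) * w12 + ((-1 : ℂ) * (2*(n:ℂ)) + (1/2 : ℂ) * (2*(n:ℂ))^2 + (1 : ℂ) * (2*(n:ℂ))^3 + (-1/2 : ℂ) * (2*(n:ℂ))^4) * w13
  · simp only [Fin.mk_zero, Fin.mk_one, Phi, Lam, Fin.sum_univ_two, k00, k01, k10, k11, e00, e01, e10, e11]
    have w0 := hc2 A B 0 0 0 0
    have w1 := hc2 A B 0 0 1 1
    have w2 := hc2 A B 0 1 0 1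
    have w3 := hc2 A B 1 0 0 1
    have w4 := hc5 A B 0 0
    simp only [k00, k01, k10, k11] at w0 w1 w2 w3 w4
    linear_combination ((-1 : ℂ) + (1 : ℂ) * (2*(n:ℂ)) + (1 : ℂ) * (2*(n:ℂ))^2 + (-1 : ℂ) * (2*(n:ℂ))^3) * w0 + ((1 : ℂ) + (-1 : ℂ) * (2*(n:ℂ)) + (-1 : ℂ) * (2*(n:ℂ))^2 + (1 : ℂ) * (2*(n:ℂ))^3) * w1 + ((-3 : ℂ) + (1 : ℂ) * (2*(n:ℂ)) + (3 : ℂ) * (2*(n:ℂ))^2 + (-1 : ℂ) * (2*(n:ℂ))^3) * w2 + ((-1 : ℂ) + (1 : ℂ) * (2*(n:ℂ))^2) * w3 + ((2 : ℂ) + (-1 : ℂ) * (2*(n:ℂ)) + (-2 : ℂ) * (2*(n:ℂ))^2 + (1 : ℂ) * (2*(n:ℂ))^3) * w4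
  · simp only [Fin.mk_zero, Fin.mk_one, Phi, Lam, Fin.sum_univ_two, k00, k01, k10, k11, e00, e01, e10, e11]
    have w0 := hc2 A B 0 0 1 0
    have w1 := hc2 B A 0 0 1 0
    have w2 := hc2 A B 0 1 0 0
    have w3 := hc2 B A 0 1 0 0
    have w4 := hc2 A B 0 1 1 1
    have w5 := hc2 B A 0 1 1 1
    have w6 := hc2 A B 1 0 0 0
    have w7 := hc2 B A 1 0 0 0
    have w8 := hc2 A B 1 0 1 1
    have w9 := hc2 B A 1 0 1 1
    have w10 := hc2 A B 1 1 0 1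
    have w11 := hc2 B A 1 1 0 1
    have w12 := hc5 B A 0 1
    simp only [k00, k01, k10, k11] at w0 w1 w2 w3 w4 w5 w6 w7 w8 w9 w10 w11 w12
    linear_combination ((-5/3 : ℂ) + (7/6 : ℂ) * (2*(n:ℂ)) + (2/3 : ℂ) * (2*(n:ℂ))^2 + (-1/6 : ℂ) * (2*(n:ℂ))^3) * w0 + ((-4/3 : ℂ) + (4/3 : ℂ) * (2*(n:ℂ)) + (1/3 : ℂ) * (2*(n:ℂ))^2 + (-1/3 : ℂ) * (2*(n:ℂ))^3) * w1 + ((-1 : ℂ) + (-13/6 : ℂ) * (2*(n:ℂ)) + (1/2 : ℂ) * (2*(n:ℂ))^2 + (2/3 : ℂ) * (2*(n:ℂ))^3) * w2 + ((2 : ℂ) + (2/3 : ℂ) * (2*(n:ℂ)) + (-1/2 : ℂ) * (2*(n:ℂ))^2 + (-1/6 : ℂ) * (2*(n:ℂ))^3) * w3 + ((1/3 : ℂ) + (-1/2 : ℂ) * (2*(n:ℂ)) + (-1/3 : ℂ) * (2*(n:ℂ))^2) * w4 + ((2/3 : ℂ) + (-1/6 : ℂ) * (2*(n:ℂ))^2)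 * w5 + ((5/3 : ℂ) + (1/2 : ℂ) * (2*(n:ℂ)) + (-1/6 : ℂ) * (2*(n:ℂ))^2) * w6 + ((4/3 : ℂ) + (-2 : ℂ) * (2*(n:ℂ)) + (-7/3 : ℂ) * (2*(n:ℂ))^2 + (1/2 : ℂ) * (2*(n:ℂ))^3 + (1/2 : ℂ) * (2*(n:ℂ))^4) * w7 + ((1 : ℂ) + (1/6 : ℂ) * (2*(n:ℂ)) + (-1/2 : ℂ) * (2*(n:ℂ))^2 + (-1/6 : ℂ) * (2*(n:ℂ))^3) * w8 + ((-2/3 : ℂ) * (2*(n:ℂ)) + (1/6 : ℂ) * (2*(n:ℂ))^3) * w9 + ((-1/3 : ℂ) + (5/6 : ℂ) * (2*(n:ℂ)) + (-1/6 : ℂ) * (2*(n:ℂ))^2 + (-1/3 : ℂ) * (2*(n:ℂ))^3) * w10 + ((4/3 : ℂ) + (2/3 : ℂ) * (2*(n:ℂ)) + (-7/3 : ℂ) * (2*(n:ℂ))^2 + (-1/6 : ℂ) * (2*(n:ℂ))^3 + (1/2 : ℂ) * (2*(n:ℂ))^4) * w11 + ((-2 : ℂ) + (5/2 : ℂ)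 * (2*(n:ℂ))^2 + (-1/2 : ℂ) * (2*(n:ℂ))^4) * w12
  · simp only [Fin.mk_zero, Fin.mk_one, Phi, Lam, Fin.sum_univ_two, k00, k01, k10, k11, e00, e01, e10, e11]
    have w0 := hc2 A B 0 0 0 0
    have w1 := hc2 B A 0 0 0 0
    have w2 := hc2 A B 0 0 1 1
    have w3 := hc2 B A 0 0 1 1
    have w4 := hc2 A B 0 1 0 1
    have w5 := hc2 B A 0 1 0 1
    have w6 := hc2 A B 1 0 0 1
    have w7 := hc2 B A 1 0 0 1
    have w8 := hc5 A B 0 0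
    simp only [k00, k01, k10, k11] at w0 w1 w2 w3 w4 w5 w6 w7 w8
    linear_combination ((-1 : ℂ) + (-1 : ℂ) * (2*(n:ℂ)) + (3/2 : ℂ) * (2*(n:ℂ))^2 + (1 : ℂ) * (2*(n:ℂ))^3 + (-1/2 : ℂ) * (2*(n:ℂ))^4) * w0 + ((-1 : ℂ) + (-1/2 : ℂ) * (2*(n:ℂ)) + (1 : ℂ) * (2*(n:ℂ))^2 + (1/2 : ℂ) * (2*(n:ℂ))^3) * w1 + ((-3 : ℂ) + (1 : ℂ) * (2*(n:ℂ)) + (5/2 : ℂ) * (2*(n:ℂ))^2 + (-1/2 : ℂ) * (2*(n:ℂ))^3) * w2 + ((-1 : ℂ) + (1/2 : ℂ) * (2*(n:ℂ)) + (1/2 : ℂ) * (2*(n:ℂ))^2) * w3 + ((-1 : ℂ) + (-3 : ℂ) * (2*(n:ℂ)) + (1 : ℂ) * (2*(n:ℂ))^2 + (2 : ℂ) * (2*(n:ℂ))^3 + (-1/2 : ℂ) * (2*(n:ℂ))^4) * w4 + ((1 : ℂ) + (1/2 : ℂ) * (2*(n:ℂ))) * w5 + ((1 : ℂ) + (1/2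 : ℂ) * (2*(n:ℂ))^3) * w6 + ((-1 : ℂ) + (-3/2 : ℂ) * (2*(n:ℂ)) + (1/2 : ℂ) * (2*(n:ℂ))^2 + (1/2 : ℂ) * (2*(n:ℂ))^3) * w7 + ((1 : ℂ) * (2*(n:ℂ)) + (-1/2 : ℂ) * (2*(n:ℂ))^2 + (-1 : ℂ) * (2*(n:ℂ))^3 + (1/2 : ℂ) * (2*(n:ℂ))^4) * w8
  · simp only [Fin.mk_zero, Fin.mk_one, Phi, Lam, Fin.sum_univ_two, k00, k01, k10, k11, e00, e01, e10, e11]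
    have w0 := hc2 A B 0 1 1 0
    have w1 := hc2 B A 0 1 1 0
    have w2 := hc2 A B 1 0 1 0
    have w3 := hc2 B A 1 0 1 0
    have w4 := hc2 A B 1 1 0 0
    have w5 := hc2 B A 1 1 0 0
    have w6 := hc2 A B 1 1 1 1
    have w7 := hc2 B A 1 1 1 1
    have w8 := hc5 A B 1 1
    simp only [k00, k01, k10, k11] at w0 w1 w2 w3 w4 w5 w6 w7 w8
    linear_combination ((-1 : ℂ) + (-1 : ℂ) * (2*(n:ℂ)) + (1/2 : ℂ) * (2*(n:ℂ))^3) * w0 + ((1 : ℂ) + (3/2 : ℂ) * (2*(n:ℂ)) + (-1/2 : ℂ) * (2*(n:ℂ))^2 + (-1/2 : ℂ) * (2*(n:ℂ))^3) * w1 + ((1 : ℂ) + (1 : ℂ) * (2*(n:ℂ))^3 + (-1/2 : ℂ) * (2*(n:ℂ))^4) * w2 + ((-1 : ℂ) + (-1/2 : ℂ) * (2*(n:ℂ))) * w3 + ((-1 : ℂ) + (3/2 : ℂ) * (2*(n:ℂ))^2 + (-1/2 : ℂ) * (2*(n:ℂ))^3) * w4 + ((1 : ℂ) + (-1/2 : ℂ)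 * (2*(n:ℂ)) + (-1/2 : ℂ) * (2*(n:ℂ))^2) * w5 + ((1 : ℂ) + (-1/2 : ℂ) * (2*(n:ℂ))^2 + (-1/2 : ℂ) * (2*(n:ℂ))^4) * w6 + ((1 : ℂ) + (1/2 : ℂ) * (2*(n:ℂ)) + (-1 : ℂ) * (2*(n:ℂ))^2 + (-1/2 : ℂ) * (2*(n:ℂ))^3) * w7 + ((1 : ℂ) * (2*(n:ℂ)) + (-1/2 : ℂ) * (2*(n:ℂ))^2 + (-1 : ℂ) * (2*(n:ℂ))^3 + (1/2 : ℂ) * (2*(n:ℂ))^4) * w8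
  · simp only [Fin.mk_zero, Fin.mk_one, Phi, Lam, Fin.sum_univ_two, k00, k01, k10, k11, e00, e01, e10, e11]
    have w0 := hc2 A B 0 0 1 0
    have w1 := hc2 B A 0 0 1 0
    have w2 := hc2 A B 0 1 0 0
    have w3 := hc2 B A 0 1 0 0
    have w4 := hc2 A B 0 1 1 1
    have w5 := hc2 B A 0 1 1 1
    have w6 := hc2 A B 1 0 0 0
    have w7 := hc2 B A 1 0 0 0
    have w8 := hc2 A B 1 0 1 1
    have w9 := hc2 B A 1 0 1 1
    have w10 := hc2 A B 1 1 0 1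
    have w11 := hc2 B A 1 1 0 1
    have w12 := hc5 B A 0 1
    simp only [k00, k01, k10, k11] at w0 w1 w2 w3 w4 w5 w6 w7 w8 w9 w10 w11 w12
    linear_combination ((-1/3 : ℂ) + (-1/6 : ℂ) * (2*(n:ℂ)) + (1/3 : ℂ) * (2*(n:ℂ))^2 + (1/6 : ℂ) * (2*(n:ℂ))^3) * w0 + ((-2/3 : ℂ) + (-1/3 : ℂ) * (2*(n:ℂ)) + (2/3 : ℂ) * (2*(n:ℂ))^2 + (1/3 : ℂ) * (2*(n:ℂ))^3) * w1 + ((-1 : ℂ) + (-5/6 : ℂ) * (2*(n:ℂ)) + (1/2 : ℂ) * (2*(n:ℂ))^2 + (1/3 : ℂ) * (2*(n:ℂ))^3) * w2 + ((1/3 : ℂ) * (2*(n:ℂ)) + (1/2 : ℂ) * (2*(n:ℂ))^2 + (1/6 : ℂ) * (2*(n:ℂ))^3) * w3 + ((-7/3 : ℂ) + (-5/2 : ℂ) * (2*(n:ℂ)) + (4/3 : ℂ) * (2*(n:ℂ))^2 + (1 : ℂ) * (2*(n:ℂ))^3) * w4 + ((4/3 : ℂ) + (1 : ℂ) * (2*(n:ℂ))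 + (1/6 : ℂ) * (2*(n:ℂ))^2) * w5 + ((1/3 : ℂ) + (1/2 : ℂ) * (2*(n:ℂ)) + (1/6 : ℂ) * (2*(n:ℂ))^2) * w6 + ((2/3 : ℂ) + (-1 : ℂ) * (2*(n:ℂ)) + (-5/3 : ℂ) * (2*(n:ℂ))^2 + (1/2 : ℂ) * (2*(n:ℂ))^3 + (1/2 : ℂ) * (2*(n:ℂ))^4) * w7 + ((1 : ℂ) + (5/6 : ℂ) * (2*(n:ℂ)) + (1/2 : ℂ) * (2*(n:ℂ))^2 + (1/6 : ℂ) * (2*(n:ℂ))^3) * w8 + ((-2 : ℂ) + (-7/3 : ℂ) * (2*(n:ℂ)) + (1 : ℂ) * (2*(n:ℂ))^2 + (5/6 : ℂ) * (2*(n:ℂ))^3) * w9 + ((-5/3 : ℂ) + (1/6 : ℂ) * (2*(n:ℂ)) + (7/6 : ℂ) * (2*(n:ℂ))^2 + (1/3 : ℂ) * (2*(n:ℂ))^3) * w10 + ((2/3 : ℂ) + (1/3 : ℂ) * (2*(n:ℂ)) + (-5/3 : ℂ) * (2*(n:ℂ))^2 + (1/6 : ℂ) * (2*(n:ℂ))^3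 + (1/2 : ℂ) * (2*(n:ℂ))^4) * w11 + ((-2 : ℂ) + (5/2 : ℂ) * (2*(n:ℂ))^2 + (-1/2 : ℂ) * (2*(n:ℂ))^4) * w12
  · simp only [Fin.mk_zero, Fin.mk_one, Phi, Lam, Fin.sum_univ_two, k00, k01, k10, k11, e00, e01, e10, e11]
    have w0 := hc2 A B 0 0 1 0
    have w1 := hc2 B A 0 0 1 0
    have w2 := hc2 A B 0 1 0 0
    have w3 := hc2 B A 0 1 0 0
    have w4 := hc2 A B 0 1 1 1
    have w5 := hc2 B A 0 1 1 1
    have w6 := hc2 A B 1 0 0 0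
    have w7 := hc2 B A 1 0 0 0
    have w8 := hc2 A B 1 0 1 1
    have w9 := hc2 B A 1 0 1 1
    have w10 := hc2 A B 1 1 0 1
    have w11 := hc2 B A 1 1 0 1
    have w12 := hc5 A B 0 1
    simp only [k00, k01, k10, k11] at w0 w1 w2 w3 w4 w5 w6 w7 w8 w9 w10 w11 w12
    linear_combination ((-2/3 : ℂ) + (-1/3 : ℂ) * (2*(n:ℂ)) + (2/3 : ℂ) * (2*(n:ℂ))^2 + (1/3 : ℂ) * (2*(n:ℂ))^3) * w0 + ((-1/3 : ℂ) + (-1/6 : ℂ) * (2*(n:ℂ)) + (1/3 : ℂ) * (2*(n:ℂ))^2 + (1/6 : ℂ) * (2*(n:ℂ))^3) * w1 + ((1/3 : ℂ) * (2*(n:ℂ)) + (1/2 : ℂ) * (2*(n:ℂ))^2 + (1/6 : ℂ) * (2*(n:ℂ))^3) * w2 + ((-1 : ℂ) + (-5/6 : ℂ) * (2*(n:ℂ)) + (1/2 : ℂ) * (2*(n:ℂ))^2 + (1/3 : ℂ) * (2*(n:ℂ))^3) * w3 + ((-2/3 : ℂ) + (1/6 : ℂ) * (2*(n:ℂ))^2)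 * w4 + ((-1/3 : ℂ) + (1/2 : ℂ) * (2*(n:ℂ)) + (1/3 : ℂ) * (2*(n:ℂ))^2) * w5 + ((-10/3 : ℂ) + (-1 : ℂ) * (2*(n:ℂ)) + (10/3 : ℂ) * (2*(n:ℂ))^2 + (1/2 : ℂ) * (2*(n:ℂ))^3 + (-1/2 : ℂ) * (2*(n:ℂ))^4) * w6 + ((1/3 : ℂ) + (1/2 : ℂ) * (2*(n:ℂ)) + (1/6 : ℂ) * (2*(n:ℂ))^2) * w7 + ((2/3 : ℂ) * (2*(n:ℂ)) + (-1/6 : ℂ) * (2*(n:ℂ))^3) * w8 + ((-1 : ℂ) + (-1/6 : ℂ) * (2*(n:ℂ)) + (1/2 : ℂ) * (2*(n:ℂ))^2 + (1/6 : ℂ) * (2*(n:ℂ))^3) * w9 + ((-4/3 : ℂ) + (-2/3 : ℂ) * (2*(n:ℂ)) + (7/3 : ℂ) * (2*(n:ℂ))^2 + (1/6 : ℂ) * (2*(n:ℂ))^3 + (-1/2 : ℂ) * (2*(n:ℂ))^4) * w10 + ((1/3 : ℂ) + (-5/6 : ℂ) * (2*(n:ℂ)) + (1/6 : ℂ) *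 (2*(n:ℂ))^2 + (1/3 : ℂ) * (2*(n:ℂ))^3) * w11 + ((2 : ℂ) + (-5/2 : ℂ) * (2*(n:ℂ))^2 + (1/2 : ℂ) * (2*(n:ℂ))^4) * w12
  · simp only [Fin.mk_zero, Fin.mk_one, Phi, Lam, Fin.sum_univ_two, k00, k01, k10, k11, e00, e01, e10, e11]
    have w0 := hc2 A B 0 0 0 0
    have w1 := hc2 B A 0 0 0 0
    have w2 := hc2 A B 0 0 1 1
    have w3 := hc2 B A 0 0 1 1
    have w4 := hc2 A B 0 1 0 1
    have w5 := hc2 B A 0 1 0 1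
    have w6 := hc2 A B 1 0 0 1
    have w7 := hc2 B A 1 0 0 1
    have w8 := hc5 A B 0 0
    simp only [k00, k01, k10, k11] at w0 w1 w2 w3 w4 w5 w6 w7 w8
    linear_combination ((1 : ℂ) + (-1/2 : ℂ) * (2*(n:ℂ))^2 + (-1/2 : ℂ) * (2*(n:ℂ))^4) * w0 + ((1 : ℂ) + (1/2 : ℂ) * (2*(n:ℂ)) + (-1 : ℂ) * (2*(n:ℂ))^2 + (-1/2 : ℂ) * (2*(n:ℂ))^3) * w1 + ((-1 : ℂ) + (3/2 : ℂ) * (2*(n:ℂ))^2 + (-1/2 : ℂ) * (2*(n:ℂ))^3) * w2 + ((1 : ℂ) + (-1/2 : ℂ) * (2*(n:ℂ)) + (-1/2 : ℂ) * (2*(n:ℂ))^2) * w3 + ((1 : ℂ) + (1 : ℂ) * (2*(n:ℂ))^3 + (-1/2 : ℂ) * (2*(n:ℂ))^4) * w4 + ((-1 : ℂ) + (-1/2 : ℂ) * (2*(n:ℂ))) * w5 + ((-1 : ℂ) + (-1 : ℂ) * (2*(n:ℂ)) + (1/2 : ℂ) * (2*(n:ℂ))^3) * w6 + ((1 : ℂ)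 + (3/2 : ℂ) * (2*(n:ℂ)) + (-1/2 : ℂ) * (2*(n:ℂ))^2 + (-1/2 : ℂ) * (2*(n:ℂ))^3) * w7 + ((1 : ℂ) * (2*(n:ℂ)) + (-1/2 : ℂ) * (2*(n:ℂ))^2 + (-1 : ℂ) * (2*(n:ℂ))^3 + (1/2 : ℂ) * (2*(n:ℂ))^4) * w8
  · simp only [Fin.mk_zero, Fin.mk_one, Phi, Lam, Fin.sum_univ_two, k00, k01, k10, k11, e00, e01, e10, e11]
    have w0 := hc2 A B 0 1 1 0
    have w1 := hc2 B A 0 1 1 0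
    have w2 := hc2 A B 1 0 1 0
    have w3 := hc2 B A 1 0 1 0
    have w4 := hc2 A B 1 1 0 0
    have w5 := hc2 B A 1 1 0 0
    have w6 := hc2 A B 1 1 1 1
    have w7 := hc2 B A 1 1 1 1
    have w8 := hc5 A B 1 1
    simp only [k00, k01, k10, k11] at w0 w1 w2 w3 w4 w5 w6 w7 w8
    linear_combination ((1 : ℂ) + (1/2 : ℂ) * (2*(n:ℂ))^3) * w0 + ((-1 : ℂ) + (-3/2 : ℂ) * (2*(n:ℂ)) + (1/2 : ℂ) * (2*(n:ℂ))^2 + (1/2 : ℂ) * (2*(n:ℂ))^3) * w1 + ((-1 : ℂ) + (-3 : ℂ) * (2*(n:ℂ)) + (1 : ℂ) * (2*(n:ℂ))^2 + (2 : ℂ) * (2*(n:ℂ))^3 + (-1/2 : ℂ) * (2*(n:ℂ))^4) * w2 + ((1 : ℂ) + (1/2 : ℂ) * (2*(n:ℂ))) * w3 + ((-3 : ℂ) + (1 : ℂ) * (2*(n:ℂ)) + (5/2 : ℂ) * (2*(n:ℂ))^2 + (-1/2 : ℂ) * (2*(n:ℂ))^3) * w4 + ((-1 : ℂ) + (1/2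 : ℂ) * (2*(n:ℂ)) + (1/2 : ℂ) * (2*(n:ℂ))^2) * w5 + ((-1 : ℂ) + (-1 : ℂ) * (2*(n:ℂ)) + (3/2 : ℂ) * (2*(n:ℂ))^2 + (1 : ℂ) * (2*(n:ℂ))^3 + (-1/2 : ℂ) * (2*(n:ℂ))^4) * w6 + ((-1 : ℂ) + (-1/2 : ℂ) * (2*(n:ℂ)) + (1 : ℂ) * (2*(n:ℂ))^2 + (1/2 : ℂ) * (2*(n:ℂ))^3) * w7 + ((1 : ℂ) * (2*(n:ℂ)) + (-1/2 : ℂ) * (2*(n:ℂ))^2 + (-1 : ℂ) * (2*(n:ℂ))^3 + (1/2 : ℂ) * (2*(n:ℂ))^4) * w8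
  · simp only [Fin.mk_zero, Fin.mk_one, Phi, Lam, Fin.sum_univ_two, k00, k01, k10, k11, e00, e01, e10, e11]
    have w0 := hc2 A B 0 0 1 0
    have w1 := hc2 B A 0 0 1 0
    have w2 := hc2 A B 0 1 0 0
    have w3 := hc2 B A 0 1 0 0
    have w4 := hc2 A B 0 1 1 1
    have w5 := hc2 B A 0 1 1 1
    have w6 := hc2 A B 1 0 0 0
    have w7 := hc2 B A 1 0 0 0
    have w8 := hc2 A B 1 0 1 1
    have w9 := hc2 B A 1 0 1 1
    have w10 := hc2 A B 1 1 0 1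
    have w11 := hc2 B A 1 1 0 1
    have w12 := hc5 A B 0 1
    simp only [k00, k01, k10, k11] at w0 w1 w2 w3 w4 w5 w6 w7 w8 w9 w10 w11 w12
    linear_combination ((2/3 : ℂ) + (1/3 : ℂ) * (2*(n:ℂ)) + (-2/3 : ℂ) * (2*(n:ℂ))^2 + (-1/3 : ℂ) * (2*(n:ℂ))^3) * w0 + ((1/3 : ℂ) + (1/6 : ℂ) * (2*(n:ℂ)) + (-1/3 : ℂ) * (2*(n:ℂ))^2 + (-1/6 : ℂ) * (2*(n:ℂ))^3) * w1 + ((-1/3 : ℂ) * (2*(n:ℂ)) + (-1/2 : ℂ) * (2*(n:ℂ))^2 + (-1/6 : ℂ) * (2*(n:ℂ))^3) * w2 + ((1 : ℂ) + (5/6 : ℂ) * (2*(n:ℂ)) + (-1/2 : ℂ) * (2*(n:ℂ))^2 + (-1/3 : ℂ) * (2*(n:ℂ))^3) * w3 + ((2/3 : ℂ) + (-1/6 : ℂ) * (2*(n:ℂ))^2) * w4 + ((1/3 : ℂ) + (-1/2 : ℂ) * (2*(n:ℂ)) + (-1/3 : ℂ) * (2*(n:ℂ))^2) * w5 + ((-2/3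 : ℂ) + (1 : ℂ) * (2*(n:ℂ)) + (5/3 : ℂ) * (2*(n:ℂ))^2 + (-1/2 : ℂ) * (2*(n:ℂ))^3 + (-1/2 : ℂ) * (2*(n:ℂ))^4) * w6 + ((-1/3 : ℂ) + (-1/2 : ℂ) * (2*(n:ℂ)) + (-1/6 : ℂ) * (2*(n:ℂ))^2) * w7 + ((-2/3 : ℂ) * (2*(n:ℂ)) + (1/6 : ℂ) * (2*(n:ℂ))^3) * w8 + ((1 : ℂ) + (1/6 : ℂ) * (2*(n:ℂ)) + (-1/2 : ℂ) * (2*(n:ℂ))^2 + (-1/6 : ℂ) * (2*(n:ℂ))^3) * w9 + ((-8/3 : ℂ) + (2/3 : ℂ) * (2*(n:ℂ)) + (8/3 : ℂ) * (2*(n:ℂ))^2 + (-1/6 : ℂ) * (2*(n:ℂ))^3 + (-1/2 : ℂ) * (2*(n:ℂ))^4) * w10 + ((-1/3 : ℂ) + (5/6 : ℂ) * (2*(n:ℂ)) + (-1/6 : ℂ) * (2*(n:ℂ))^2 + (-1/3 : ℂ) * (2*(n:ℂ))^3) * w11 + ((2 : ℂ) + (-5/2 : ℂ) * (2*(n:ℂ))^2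 + (1/2 : ℂ) * (2*(n:ℂ))^4) * w12
  · simp only [Fin.mk_zero, Fin.mk_one, Phi, Lam, Fin.sum_univ_two, k00, k01, k10, k11, e00, e01, e10, e11]
    have w0 := hc2 A B 0 1 1 0
    have w1 := hc2 A B 1 0 1 0
    have w2 := hc2 A B 1 1 0 0
    have w3 := hc2 A B 1 1 1 1
    have w4 := hc5 A B 1 1
    simp only [k00, k01, k10, k11] at w0 w1 w2 w3 w4
    linear_combination ((-1 : ℂ) + (1 : ℂ) * (2*(n:ℂ))^2) * w0 + ((-3 : ℂ) + (1 : ℂ) * (2*(n:ℂ)) + (3 : ℂ) * (2*(n:ℂ))^2 + (-1 : ℂ) * (2*(n:ℂ))^3) * w1 + ((1 : ℂ) + (-1 : ℂ) * (2*(n:ℂ)) + (-1 : ℂ) * (2*(n:ℂ))^2 + (1 : ℂ) * (2*(n:ℂ))^3) * w2 + ((-1 : ℂ) + (1 : ℂ) * (2*(n:ℂ)) + (1 : ℂ) * (2*(n:ℂ))^2 + (-1 : ℂ) * (2*(n:ℂ))^3) * w3 + ((2 : ℂ) + (-1 : ℂ) * (2*(n:ℂ)) + (-2 : ℂ) * (2*(n:ℂ))^2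 + (1 : ℂ) * (2*(n:ℂ))^3) * w4
  · simp only [Fin.mk_zero, Fin.mk_one, Phi, Lam, Fin.sum_univ_two, k00, k01, k10, k11, e00, e01, e10, e11]
    have w0 := hc2 A B 0 0 1 0
    have w1 := hc2 B A 0 0 1 0
    have w2 := hc2 A B 0 1 0 0
    have w3 := hc2 B A 0 1 0 0
    have w4 := hc2 A B 0 1 1 1
    have w5 := hc2 B A 0 1 1 1
    have w6 := hc2 A B 1 0 0 0
    have w7 := hc2 B A 1 0 0 0
    have w8 := hc2 A B 1 0 1 1
    have w9 := hc2 B A 1 0 1 1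
    have w10 := hc2 A B 1 1 0 1
    have w11 := hc2 B A 1 1 0 1
    have w12 := hc5 A B 0 1
    have w13 := hc5 B A 0 1
    simp only [k00, k01, k10, k11] at w0 w1 w2 w3 w4 w5 w6 w7 w8 w9 w10 w11 w12 w13
    linear_combination ((2/3 : ℂ) + (-1/6 : ℂ) * (2*(n:ℂ)) + (-2/3 : ℂ) * (2*(n:ℂ))^2 + (1/6 : ℂ) * (2*(n:ℂ))^3) * w0 + ((-2/3 : ℂ) + (1/6 : ℂ) * (2*(n:ℂ)) + (2/3 : ℂ) * (2*(n:ℂ))^2 + (-1/6 : ℂ) * (2*(n:ℂ))^3) * w1 + ((1/6 : ℂ) * (2*(n:ℂ)) + (-1/6 : ℂ) * (2*(n:ℂ))^3) * w2 + ((-1/6 : ℂ) * (2*(n:ℂ)) + (1/6 : ℂ) * (2*(n:ℂ))^3) * w3 + ((-4/3 : ℂ) + (1/2 : ℂ) * (2*(n:ℂ)) + (5/6 : ℂ) * (2*(n:ℂ))^2) * w4 + ((-2/3 : ℂ) + (1/2 : ℂ) * (2*(n:ℂ)) + (1/6 : ℂ) * (2*(n:ℂ))^2) * w5 + ((-2/3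 : ℂ) + (-1/2 : ℂ) * (2*(n:ℂ)) + (7/6 : ℂ) * (2*(n:ℂ))^2 + (1/2 : ℂ) * (2*(n:ℂ))^3 + (-1/2 : ℂ) * (2*(n:ℂ))^4) * w6 + ((2/3 : ℂ) + (1/2 : ℂ) * (2*(n:ℂ)) + (-7/6 : ℂ) * (2*(n:ℂ))^2 + (-1/2 : ℂ) * (2*(n:ℂ))^3 + (1/2 : ℂ) * (2*(n:ℂ))^4) * w7 + ((-2 : ℂ) + (5/6 : ℂ) * (2*(n:ℂ)) + (3/2 : ℂ) * (2*(n:ℂ))^2 + (-1/3 : ℂ) * (2*(n:ℂ))^3) * w8 + ((1/6 : ℂ) * (2*(n:ℂ)) + (-1/2 : ℂ) * (2*(n:ℂ))^2 + (1/3 : ℂ) * (2*(n:ℂ))^3) * w9 + ((4/3 : ℂ) + (-17/6 : ℂ) * (2*(n:ℂ)) + (1/6 : ℂ) * (2*(n:ℂ))^2 + (11/6 : ℂ) * (2*(n:ℂ))^3 + (-1/2 : ℂ) * (2*(n:ℂ))^4) * w10 + ((2/3 : ℂ) + (-1/6 : ℂ) * (2*(n:ℂ)) + (-1/6 : ℂ)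 * (2*(n:ℂ))^2 + (-5/6 : ℂ) * (2*(n:ℂ))^3 + (1/2 : ℂ) * (2*(n:ℂ))^4) * w11 + ((1 : ℂ) * (2*(n:ℂ)) + (-1/2 : ℂ) * (2*(n:ℂ))^2 + (-1 : ℂ) * (2*(n:ℂ))^3 + (1/2 : ℂ) * (2*(n:ℂ))^4) * w12 + ((-1 : ℂ) * (2*(n:ℂ)) + (1/2 : ℂ) * (2*(n:ℂ))^2 + (1 : ℂ) * (2*(n:ℂ))^3 + (-1/2 : ℂ) * (2*(n:ℂ))^4) * w13
  · simp only [Fin.mk_zero, Fin.mk_one, Phi, Lam, Fin.sum_univ_two, k00, k01, k10, k11, e00, e01, e10, e11]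
    have w0 := hc2 A B 1 1 1 0
    simp only [k00, k01, k10, k11] at w0
    linear_combination ((-2 : ℂ) + (-1 : ℂ) * (2*(n:ℂ)) + (2 : ℂ) * (2*(n:ℂ))^2 + (1 : ℂ) * (2*(n:ℂ))^3) * w0
  · simp only [Fin.mk_zero, Fin.mk_one, Phi, Lam, Fin.sum_univ_two, k00, k01, k10, k11, e00, e01, e10, e11]
    have w0 := hc2 A B 0 1 1 0
    have w1 := hc2 A B 1 0 1 0
    have w2 := hc2 A B 1 1 0 0
    have w3 := hc2 A B 1 1 1 1
    have w4 := hc5 A B 1 1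
    simp only [k00, k01, k10, k11] at w0 w1 w2 w3 w4
    linear_combination ((1 : ℂ) + (-1 : ℂ) * (2*(n:ℂ))^2) * w0 + ((-1 : ℂ) + (-1 : ℂ) * (2*(n:ℂ)) + (2 : ℂ) * (2*(n:ℂ))^2 + (1 : ℂ) * (2*(n:ℂ))^3 + (-1 : ℂ) * (2*(n:ℂ))^4) * w1 + ((-1 : ℂ) + (1 : ℂ) * (2*(n:ℂ)) + (1 : ℂ) * (2*(n:ℂ))^2 + (-1 : ℂ) * (2*(n:ℂ))^3) * w2 + ((-3 : ℂ) + (-1 : ℂ) * (2*(n:ℂ)) + (4 : ℂ) * (2*(n:ℂ))^2 + (1 : ℂ) * (2*(n:ℂ))^3 + (-1 : ℂ) * (2*(n:ℂ))^4) * w3 + ((2 : ℂ) + (1 : ℂ) * (2*(n:ℂ)) + (-3 : ℂ) * (2*(n:ℂ))^2 + (-1 : ℂ) * (2*(n:ℂ))^3 + (1 : ℂ) * (2*(n:ℂ))^4) * w4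
end Main3

section Main4

variable {n : ℕ}

lemma phiC (RH : Fin (2 * n) → Fin (2 * n) → Fin 2 → Fin 2 → Fin 2 → Fin 2 → ℂ)
    (x y : Fin (2*n)) (i j : Fin 2) : Phi n RH x y i j = Phi n RH y x i j := by
  simp only [Phi, Fin.sum_univ_two]; ring

lemma phiPC (RH : Fin (2 * n) → Fin (2 * n) → Fin 2 → Fin 2 → Fin 2 → Fin 2 → ℂ)
    (x y : Fin (2*n)) (i j : Fin 2) : Phi n RH x y i j = Phi n RH x y j i := by
  simp only [Phi, Fin.sum_univ_two]; ring

lemma lamC (RH : Fin (2 * n) → Fin (2 * n) → Fin 2 → Fin 2 → Fin 2 → Fin 2 → ℂ)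
    (x y : Fin (2*n)) : Lam n RH x y = -Lam n RH y x := by
  simp only [Lam, Fin.sum_univ_two]; ring

lemma keyL (hn : 2 ≤ n)
    (RE : Fin 2 → Fin 2 → Fin (2 * n) → Fin (2 * n) → Fin (2 * n) → Fin (2 * n) → ℂ)
    (RH : Fin (2 * n) → Fin (2 * n) → Fin 2 → Fin 2 → Fin 2 → Fin 2 → ℂ)
    (hE : ∀ A' B' A B C D, RE A' B' A B C D = -RE B' A' B A C D)
    (hH : ∀ A B A' B' C' D', RH A B A' B' C' D' = -RH B A B' A' C' D')
    (htE : ∀ A' B' A B, ∑ C, RE A' B' A B C C = 0)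
    (htH : ∀ A B A' B', ∑ C', RH A B A' B' C' C' = 0)
    (hB : ∀ (A B C : Fin (2 * n)) (A' B' C' : Fin 2) (D : Fin (2 * n)) (D' : Fin 2),
      (RE A' B' A B C D * kdel C' D' + RH A B A' B' C' D' * kdel C D) +
      (RE B' C' B C A D * kdel A' D' + RH B C B' C' A' D' * kdel A D) +
      (RE C' A' C A B D * kdel B' D' + RH C A C' A' B' D' * kdel B D) = 0)
    (A B : Fin (2*n)) (p q r s : Fin 2) :
    RH A B p q r s = kdel p s * Phi n RH A B q r - kdel q s * Phi n RH A B p r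
      + Lam n RH A B * (kdel p s * epsLow q r + kdel q s * epsLow p r) := by
  have h := keymul RE RH hE hH htE htH hB A B p q r s
  have c2 : (2*(n:ℂ)-2) ≠ 0 :=
    sub_ne_zero.mpr (by exact_mod_cast (show (2*n : ℕ) ≠ 2 by omega))
  have c3 : (2*(n:ℂ)+2) ≠ 0 := by
    have h5 : ((2*n+2 : ℕ) : ℂ) ≠ 0 := Nat.cast_ne_zero.mpr (by omega)
    push_cast at h5; exact h5
  have c4 : (2*(n:ℂ)-1) ≠ 0 :=
    sub_ne_zero.mpr (by exact_mod_cast (show (2*n : ℕ) ≠ 1 by omega))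
  have c5 : (2*(n:ℂ)+1) ≠ 0 := by
    have h5 : ((2*n+1 : ℕ) : ℂ) ≠ 0 := Nat.cast_ne_zero.mpr (by omega)
    push_cast at h5; exact h5
  have hne : (2*(n:ℂ)-2) * (2*(n:ℂ)+2) * (2*(n:ℂ)-1) * (2*(n:ℂ)+1) ≠ 0 :=
    mul_ne_zero (mul_ne_zero (mul_ne_zero c2 c3) c4) c5
  exact sub_eq_zero.mp ((mul_eq_zero.mp h).resolve_left hne)

lemma sformL (hn : 2 ≤ n)
    (RE : Fin 2 → Fin 2 → Fin (2 * n) → Fin (2 * n) → Fin (2 * n) → Fin (2 * n) → ℂ)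
    (RH : Fin (2 * n) → Fin (2 * n) → Fin 2 → Fin 2 → Fin 2 → Fin 2 → ℂ)
    (hE : ∀ A' B' A B C D, RE A' B' A B C D = -RE B' A' B A C D)
    (hH : ∀ A B A' B' C' D', RH A B A' B' C' D' = -RH B A B' A' C' D')
    (htE : ∀ A' B' A B, ∑ C, RE A' B' A B C C = 0)
    (htH : ∀ A B A' B', ∑ C', RH A B A' B' C' C' = 0)
    (hB : ∀ (A B C : Fin (2 * n)) (A' B' C' : Fin 2) (D : Fin (2 * n)) (D' : Fin 2),
      (RE A' B' A B C D * kdel C' D' + RH A B A' B' C' D' * kdel C D) +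
      (RE B' C' B C A D * kdel A' D' + RH B C B' C' A' D' * kdel A D) +
      (RE C' A' C A B D * kdel B' D' + RH C A C' A' B' D' * kdel B D) = 0)
    (x y : Fin (2*n)) (p q : Fin 2) :
    RH x y p 0 q 0 + RH x y p 1 q 1
      = -Phi n RH x y p q + 3 * Lam n RH x y * epsLow p q := by
  have k0 := keyL hn RE RH hE hH htE htH hB x y p 0 q 0
  have k1 := keyL hn RE RH hE hH htE htH hB x y p 1 q 1
  fin_cases p <;> fin_cases q <;>
    simp only [Fin.mk_zero, Fin.mk_one, k00, k01, k10, k11, e00, e01, e10, e11] at k0 k1 ⊢ <;>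
    linear_combination k0 + k1

end Main4

/-- Proposition 2.2 (curvature decomposition on unimodular quaternionic manifolds of
dimension `> 4`): the curvature components decompose in terms of `Λ`, `Φ`, `Ψ`, with the
stated symmetries and trace-freeness. -/
theorem curvature_decomposition (n : ℕ) (hn : 2 ≤ n)
    (RE : Fin 2 → Fin 2 → Fin (2 * n) → Fin (2 * n) → Fin (2 * n) → Fin (2 * n) → ℂ)
    (RH : Fin (2 * n) → Fin (2 * n) → Fin 2 → Fin 2 → Fin 2 → Fin 2 → ℂ)
    (hE : ∀ A' B' A B C D, RE A' B' A B C D = -RE B' A' B A C D)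
    (hH : ∀ A B A' B' C' D', RH A B A' B' C' D' = -RH B A B' A' C' D')
    (htE : ∀ A' B' A B, ∑ C, RE A' B' A B C C = 0)
    (htH : ∀ A B A' B', ∑ C', RH A B A' B' C' C' = 0)
    (hBianchi : ∀ (A B C : Fin (2 * n)) (A' B' C' : Fin 2)
        (D : Fin (2 * n)) (D' : Fin 2),
      (RE A' B' A B C D * kdel C' D' + RH A B A' B' C' D' * kdel C D) +
      (RE B' C' B C A D * kdel A' D' + RH B C B' C' A' D' * kdel A D) +
      (RE C' A' C A B D * kdel B' D' + RH C A C' A' B' D' * kdel B D) = 0) :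
    (∀ (A' B' : Fin 2) (A B C D : Fin (2 * n)),
      (1 / 2 : ℂ) * (RE A' B' A B C D - RE B' A' A B C D) =
        epsLow A' B' * (Psi n RE RH A B C D +
          kdel A D * Lam n RH B C + kdel B D * Lam n RH A C)) ∧
    (∀ (A' B' : Fin 2) (A B C D : Fin (2 * n)),
      (1 / 2 : ℂ) * (RE A' B' A B C D + RE B' A' A B C D) =
        kdel A D * Phi n RH B C A' B' - kdel B D * Phi n RH A C A' B') ∧
    (∀ (A B : Fin (2 * n)) (A' B' C' D' : Fin 2),
      (1 / 2 : ℂ) * (RH A B A' B' C' D' + RH B A A' B' C' D') =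
        kdel A' D' * Phi n RH A B B' C' - kdel B' D' * Phi n RH A B A' C') ∧
    (∀ (A B : Fin (2 * n)) (A' B' C' D' : Fin 2),
      (1 / 2 : ℂ) * (RH A B A' B' C' D' - RH B A A' B' C' D') =
        Lam n RH A B * (kdel A' D' * epsLow B' C' + kdel B' D' * epsLow A' C')) ∧
    (∀ A B : Fin (2 * n), Lam n RH A B = -Lam n RH B A) ∧
    (∀ (A B : Fin (2 * n)) (A' B' : Fin 2),
      Phi n RH A B A' B' = Phi n RH B A A' B' ∧ Phi n RH A B A' B' = Phi n RH A B B' A') ∧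
    (∀ A B C D : Fin (2 * n),
      Psi n RE RH A B C D = Psi n RE RH B A C D ∧
      Psi n RE RH A B C D = Psi n RE RH A C B D) ∧
    (∀ B C : Fin (2 * n), ∑ D, Psi n RE RH D B C D = 0) := by
  have kk := keyL hn RE RH hE hH htE htH hBianchi
  have hc1 := hC1L RE RH hH htH hBianchi
  have sf := sformL hn RE RH hE hH htE htH hBianchi
  have pc := phiC (n := n) RH
  have ppc := phiPC (n := n) RH
  have lc := lamC (n := n) RH
  have hfa : ∀ (A' B' : Fin 2) (A B C D : Fin (2 * n)),
      (1 / 2 : ℂ) * (RE A' B' A B C D - RE B' A' A B C D) =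
        epsLow A' B' * (Psi n RE RH A B C D +
          kdel A D * Lam n RH B C + kdel B D * Lam n RH A C) := by
    intro A' B' A B C D
    fin_cases A' <;> fin_cases B' <;>
      simp only [Fin.mk_zero, Fin.mk_one, Psi, e00, e01, e10, e11] <;> ring
  have hff : ∀ A B C D : Fin (2 * n),
      Psi n RE RH A B C D = Psi n RE RH B A C D ∧
      Psi n RE RH A B C D = Psi n RE RH A C B D := by
    intro A B C D
    constructor
    · simp only [Psi]
      linear_combination (1/2 : ℂ) * hE 0 1 A B C D - (1/2 : ℂ) * hE 1 0 A B C D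
    · simp only [Psi]
      have w0 := hc1 A B C 0 1 D
      have w1 := hc1 A B C 1 0 D
      have w2 := hc1 A C B 0 1 D
      have w3 := hc1 A C B 1 0 D
      have w4 := hc1 B A C 0 1 D
      have w5 := hc1 B A C 1 0 D
      have w6 := hc1 B C A 1 0 D
      have w7 := hc1 C A B 1 0 D
      have w8 := hc1 C B A 0 1 D
      have w9 := sf A B 0 1
      have w10 := sf A B 1 0
      have w11 := sf A C 0 1
      have w12 := sf A C 1 0
      have w13 := sf B C 0 1
      have w14 := sf B C 1 0
      have w15 := sf C B 0 1
      have w16 := sf C B 1 0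
      have w17 := ppc A B 0 1
      have w18 := ppc A C 0 1
      have w19 := pc B C 0 1
      have w20 := pc B C 1 0
      have w21 := hE 0 1 A B C D
      simp only [e00, e01, e10, e11] at w10 w11 w12 w13 w14 w15 w16 w9
      linear_combination ((-1/2 : ℂ)) * w0 + ((-1/4 : ℂ)) * w1 + ((1/12 : ℂ)) * w2 + ((1/6 : ℂ)) * w3 + ((-1/12 : ℂ)) * w4 + ((-2/3 : ℂ)) * w5 + ((1/4 : ℂ)) * w6 + ((1/4 : ℂ)) * w7 + ((1/4 : ℂ)) * w8 + ((-1/6 : ℂ)) * (kdel C D) * w9 + ((1/6 : ℂ)) * (kdel C D) * w10 + ((1/6 : ℂ)) * (kdel B D) * w11 + ((-1/6 : ℂ)) * (kdel B D) * w12 + ((1/6 : ℂ)) * (kdel A D) * w13 + ((-1/6 : ℂ)) * (kdel A D) * w14 + ((-1/6 : ℂ)) * (kdel A D) * w15 + ((1/6 : ℂ)) * (kdel A D) * w16 + ((1/6 : ℂ)) * (kdel C D) * w17 + ((-1/6 : ℂ)) * (kdel B D) * w18 + ((-1/6 : ℂ)) * (kdel A D) * w19 + ((1/6 : ℂ)) *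 (kdel A D) * w20 + ((1 : ℂ)) * w21
  refine ⟨hfa, ?_, ?_, ?_, ?_, ?_, hff, ?_⟩
  · -- part (b)
    intro A' B' A B C D
    fin_cases A' <;> fin_cases B'
    · simp only [Fin.mk_zero, Fin.mk_one]
      have w0 := hc1 A B C 0 0 D
      have w1 := hc1 B C A 0 0 D
      have w2 := hc1 C A B 0 0 D
      have w3 := sf A B 0 0
      have w4 := sf A C 0 0
      have w5 := sf B A 0 0
      have w6 := sf B C 0 0
      have w7 := sf C A 0 0
      have w8 := sf C B 0 0
      have w9 := pc A B 0 0
      have w10 := pc A C 0 0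
      have w11 := pc B C 0 0
      simp only [e00, e01, e10, e11] at w3 w4 w5 w6 w7 w8
      linear_combination ((3/4 : ℂ)) * w0 + ((-1/4 : ℂ)) * w1 + ((-1/4 : ℂ)) * w2 + ((1/4 : ℂ)) * (kdel C D) * w3 + ((3/4 : ℂ)) * (kdel B D) * w4 + ((-1/4 : ℂ)) * (kdel C D) * w5 + ((-3/4 : ℂ)) * (kdel A D) * w6 + ((1/4 : ℂ)) * (kdel B D) * w7 + ((-1/4 : ℂ)) * (kdel A D) * w8 + ((-1/4 : ℂ)) * (kdel C D) * w9 + ((1/4 : ℂ)) * (kdel B D) * w10 + ((-1/4 : ℂ)) * (kdel A D) * w11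
    · simp only [Fin.mk_zero, Fin.mk_one]
      have w0 := hc1 A B C 0 1 D
      have w1 := hc1 A B C 1 0 D
      have w2 := hc1 B C A 0 1 D
      have w3 := hc1 B C A 1 0 D
      have w4 := hc1 C A B 0 1 D
      have w5 := hc1 C A B 1 0 D
      have w6 := sf A B 0 1
      have w7 := sf A B 1 0
      have w8 := sf A C 0 1
      have w9 := sf A C 1 0
      have w10 := sf B A 0 1
      have w11 := sf B A 1 0
      have w12 := sf B C 0 1
      have w13 := sf B C 1 0
      have w14 := sf C A 0 1
      have w15 := sf C A 1 0
      have w16 := sf C B 0 1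
      have w17 := sf C B 1 0
      have w18 := pc A B 0 1
      have w19 := pc A B 1 0
      have w20 := pc A C 0 1
      have w21 := ppc A C 0 1
      have w22 := pc A C 1 0
      have w23 := pc B C 0 1
      have w24 := ppc B C 0 1
      have w25 := pc B C 1 0
      simp only [e00, e01, e10, e11] at w10 w11 w12 w13 w14 w15 w16 w17 w6 w7 w8 w9
      linear_combination ((3/8 : ℂ)) * w0 + ((3/8 : ℂ)) * w1 + ((-1/8 : ℂ)) * w2 + ((-1/8 : ℂ)) * w3 + ((-1/8 : ℂ)) * w4 + ((-1/8 : ℂ)) * w5 + ((1/8 : ℂ)) * (kdel C D) * w6 + ((1/8 : ℂ)) * (kdel C D) * w7 + ((3/8 : ℂ)) * (kdel B D) * w8 + ((3/8 : ℂ)) * (kdel B D) * w9 + ((-1/8 : ℂ)) * (kdel C D) * w10 + ((-1/8 : ℂ)) * (kdel C D) * w11 + ((-3/8 : ℂ)) * (kdel A D) * w12 + ((-3/8 : ℂ)) * (kdel A D) * w13 + ((1/8 : ℂ)) * (kdel B D) * w14 + ((1/8 : ℂ)) * (kdel B D) * w15 + ((-1/8 : ℂ)) * (kdel A D) * w16 +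 ((-1/8 : ℂ)) * (kdel A D) * w17 + ((-1/8 : ℂ)) * (kdel C D) * w18 + ((-1/8 : ℂ)) * (kdel C D) * w19 + ((1/8 : ℂ)) * (kdel B D) * w20 + ((1/2 : ℂ)) * (kdel B D) * w21 + ((1/8 : ℂ)) * (kdel B D) * w22 + ((-1/8 : ℂ)) * (kdel A D) * w23 + ((-1/2 : ℂ)) * (kdel A D) * w24 + ((-1/8 : ℂ)) * (kdel A D) * w25
    · simp only [Fin.mk_zero, Fin.mk_one]
      have w0 := hc1 A B C 0 1 D
      have w1 := hc1 A B C 1 0 D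
      have w2 := hc1 B C A 0 1 D
      have w3 := hc1 B C A 1 0 D
      have w4 := hc1 C A B 0 1 D
      have w5 := hc1 C A B 1 0 D
      have w6 := sf A B 0 1
      have w7 := sf A B 1 0
      have w8 := sf A C 0 1
      have w9 := sf A C 1 0
      have w10 := sf B A 0 1
      have w11 := sf B A 1 0
      have w12 := sf B C 0 1
      have w13 := sf B C 1 0
      have w14 := sf C A 0 1
      have w15 := sf C A 1 0
      have w16 := sf C B 0 1
      have w17 := sf C B 1 0
      have w18 := pc A B 0 1
      have w19 := pc A B 1 0
      have w20 := pc A C 0 1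
      have w21 := ppc A C 0 1
      have w22 := pc A C 1 0
      have w23 := pc B C 0 1
      have w24 := ppc B C 0 1
      have w25 := pc B C 1 0
      simp only [e00, e01, e10, e11] at w10 w11 w12 w13 w14 w15 w16 w17 w6 w7 w8 w9
      linear_combination ((3/8 : ℂ)) * w0 + ((3/8 : ℂ)) * w1 + ((-1/8 : ℂ)) * w2 + ((-1/8 : ℂ)) * w3 + ((-1/8 : ℂ)) * w4 + ((-1/8 : ℂ)) * w5 + ((1/8 : ℂ)) * (kdel C D) * w6 + ((1/8 : ℂ)) * (kdel C D) * w7 + ((3/8 : ℂ)) * (kdel B D) * w8 + ((3/8 : ℂ)) * (kdel B D) * w9 + ((-1/8 : ℂ)) * (kdel C D) * w10 + ((-1/8 : ℂ)) * (kdel C D) * w11 + ((-3/8 : ℂ)) * (kdel A D) * w12 + ((-3/8 : ℂ)) * (kdel A D) * w13 + ((1/8 : ℂ)) * (kdel B D) * w14 + ((1/8 : ℂ)) * (kdel B D) * w15 + ((-1/8 : ℂ)) * (kdel A D) * w16 + ((-1/8 : ℂ)) * (kdel A D) * w17 + ((-1/8 : ℂ)) * (kdel C D) * w18 + ((-1/8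 : ℂ)) * (kdel C D) * w19 + ((1/8 : ℂ)) * (kdel B D) * w20 + ((-1/2 : ℂ)) * (kdel B D) * w21 + ((1/8 : ℂ)) * (kdel B D) * w22 + ((-1/8 : ℂ)) * (kdel A D) * w23 + ((1/2 : ℂ)) * (kdel A D) * w24 + ((-1/8 : ℂ)) * (kdel A D) * w25
    · simp only [Fin.mk_zero, Fin.mk_one]
      have w0 := hc1 A B C 1 1 D
      have w1 := hc1 B C A 1 1 D
      have w2 := hc1 C A B 1 1 D
      have w3 := sf A B 1 1
      have w4 := sf A C 1 1
      have w5 := sf B A 1 1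
      have w6 := sf B C 1 1
      have w7 := sf C A 1 1
      have w8 := sf C B 1 1
      have w9 := pc A B 1 1
      have w10 := pc A C 1 1
      have w11 := pc B C 1 1
      simp only [e00, e01, e10, e11] at w3 w4 w5 w6 w7 w8
      linear_combination ((3/4 : ℂ)) * w0 + ((-1/4 : ℂ)) * w1 + ((-1/4 : ℂ)) * w2 + ((1/4 : ℂ)) * (kdel C D) * w3 + ((3/4 : ℂ)) * (kdel B D) * w4 + ((-1/4 : ℂ)) * (kdel C D) * w5 + ((-3/4 : ℂ)) * (kdel A D) * w6 + ((1/4 : ℂ)) * (kdel B D) * w7 + ((-1/4 : ℂ)) * (kdel A D) * w8 + ((-1/4 : ℂ)) * (kdel C D) * w9 + ((1/4 : ℂ)) * (kdel B D) * w10 + ((-1/4 : ℂ)) * (kdel A D) * w11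
  · -- part (c)
    intro A B A' B' C' D'
    linear_combination (1/2 : ℂ) * kk A B A' B' C' D' + (1/2 : ℂ) * kk B A A' B' C' D'
      + (1/2 : ℂ) * (kdel A' D') * pc B A B' C' - (1/2 : ℂ) * (kdel B' D') * pc B A A' C'
      + (1/2 : ℂ) * (kdel A' D' * epsLow B' C' + kdel B' D' * epsLow A' C') * lc A B
  · -- part (d)
    intro A B A' B' C' D'
    linear_combination (1/2 : ℂ) * kk A B A' B' C' D' - (1/2 : ℂ) * kk B A A' B' C' D'
      + (1/2 : ℂ) * (kdel A' D') * pc A B B' C' - (1/2 : ℂ) * (kdel B' D') * pc A B A' C'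
      - (1/2 : ℂ) * (kdel A' D' * epsLow B' C' + kdel B' D' * epsLow A' C') * lc A B
  · exact fun A B => lc A B
  · exact fun A B A' B' => ⟨pc A B A' B', ppc A B A' B'⟩
  · -- part (g)
    intro B C
    have tr : ∀ X Y : Fin (2 * n), ∑ Z, Psi n RE RH X Y Z Z = 0 := by
      intro X Y
      have t1 : ∑ Z : Fin (2*n), (1 / 2 : ℂ) * (RE 0 1 X Y Z Z - RE 1 0 X Y Z Z) = 0 := by
        rw [← Finset.mul_sum, Finset.sum_sub_distrib, htE 0 1 X Y, htE 1 0 X Y]; ring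
      have t2 : ∑ Z : Fin (2*n), kdel X Z * Lam n RH Y Z = Lam n RH Y X :=
        sum_kdel_mul (fun Z => Lam n RH Y Z) X
      have t3 : ∑ Z : Fin (2*n), kdel Y Z * Lam n RH X Z = Lam n RH X Y :=
        sum_kdel_mul (fun Z => Lam n RH X Z) Y
      simp only [Psi, Finset.sum_sub_distrib]
      linear_combination t1 - t2 - t3 - lc Y X
    calc ∑ D, Psi n RE RH D B C D = ∑ D, Psi n RE RH B C D D :=
          Finset.sum_congr rfl fun D _ => ((hff D B C D).1).trans ((hff B D C D).2)
      _ = 0 := tr B C
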